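/- Let V be a real inner product space, let x₁,…,xₙ ∈ V, α₁,…,αₙ ∈ ℝ, c ∈ ℝ, and suppose z ∈ V satisfies Σᵢ αᵢ‖z - xᵢ‖ = c. For y ∈ V with z - xᵢ ≠ 0 for all i, define for each i the quantity δᵢ = (‖z - xᵢ‖² + ⟨z - xᵢ, y⟩)/‖z - xᵢ‖ if αᵢ > 0 and δᵢ = √(‖y‖² + (‖z - xᵢ‖² + ⟨z - xᵢ, y⟩)²/‖z - xᵢ‖²) if αᵢ < 0, and assume ‖z - xᵢ‖² + ⟨z - xᵢ, y⟩ ≥ 0 for all i. If c + (Σᵢ αᵢ)‖y‖ - Σᵢ αᵢ δᵢ < 0, then Σᵢ αᵢ‖z + y - xᵢ‖ ≥ c + (Σᵢ αᵢ)‖y‖. -/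

import Mathlib

theorem locus_add_lower_bound {V : Type*} [NormedAddCommGroup V] [InnerProductSpace ℝ V]
    {n : ℕ} (x : Fin n → V) (α : Fin n → ℝ) (c : ℝ) (z y : V)
    (hz : ∑ i, α i * ‖z - x i‖ = c)
    (hne : ∀ i, z - x i ≠ 0)
    (hnn : ∀ i, ‖z - x i‖ ^ 2 + (inner ℝ (z - x i) y : ℝ) ≥ 0)
    (δ : Fin n → ℝ)
    (hδ : ∀ i, δ i = if 0 < α i then
        (‖z - x i‖ ^ 2 + (inner ℝ (z - x i) y : ℝ)) / ‖z - x i‖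
      else
        Real.sqrt (‖y‖ ^ 2 + (‖z - x i‖ ^ 2 + (inner ℝ (z - x i) y : ℝ)) ^ 2 / ‖z - x i‖ ^ 2))
    (hlt : c + (∑ i, α i) * ‖y‖ - ∑ i, α i * δ i < 0) :
    ∑ i, α i * ‖z + y - x i‖ ≥ c + (∑ i, α i) * ‖y‖ := by
  have key : ∀ i, α i * δ i ≤ α i * ‖z + y - x i‖ := by
    intro i
    set w := z - x i with hw
    have hzy : z + y - x i = w + y := by rw [hw]; abel
    have hwn : (0:ℝ) < ‖w‖ := norm_pos_iff.mpr (hne i)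
    have hinner : (inner ℝ w (w + y) : ℝ) = ‖w‖ ^ 2 + (inner ℝ w y : ℝ) := by
      rw [inner_add_right, real_inner_self_eq_norm_sq]
    have hcs : (‖w‖ ^ 2 + (inner ℝ w y : ℝ)) ≤ ‖w‖ * ‖w + y‖ := by
      rw [← hinner]; exact real_inner_le_norm w (w + y)
    rw [hzy, hδ i]
    by_cases hα : 0 < α i
    · rw [if_pos hα]
      apply mul_le_mul_of_nonneg_left _ hα.le
      rw [div_le_iff₀ hwn]
      linarith [hcs]
    · rw [if_neg hα]
      push_neg at hα
      apply mul_le_mul_of_nonpos_left _ hα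
      rw [show ‖w + y‖ = Real.sqrt (‖w + y‖ ^ 2) from
        (Real.sqrt_sq (norm_nonneg _)).symm]
      apply Real.sqrt_le_sqrt
      have hexp : ‖w + y‖ ^ 2 = ‖w‖ ^ 2 + 2 * (inner ℝ w y : ℝ) + ‖y‖ ^ 2 := by
        rw [← real_inner_self_eq_norm_sq, ← real_inner_self_eq_norm_sq,
          ← real_inner_self_eq_norm_sq, inner_add_add_self, real_inner_comm y w]
        ring
      rw [hexp, ← hw]
      have hd : (‖w‖ ^ 2 + (inner ℝ w y : ℝ)) ^ 2 / ‖w‖ ^ 2 ≥ ‖w‖ ^ 2 + 2 * (inner ℝ w y : ℝ) := by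
        rw [ge_iff_le, le_div_iff₀ (by positivity)]
        nlinarith [sq_nonneg ((inner ℝ w y : ℝ))]
      linarith
  have hsum : ∑ i, α i * δ i ≤ ∑ i, α i * ‖z + y - x i‖ :=
    Finset.sum_le_sum fun i _ => key i
  linarith
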